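/- Let g ∈ Sym_+(m) and let h, k be symmetric m×m matrices, orthonormal with respect to the metric ⟨h,k⟩_g = (1/4) tr(h g^{-1} k g^{-1})√det(g). Then the sectional curvature K_g(h,k) = (1/16)[tr([g^{-1}h, g^{-1}k]²) + (m/4)(tr(g^{-1}h g^{-1}k))² − (m/4) tr((g^{-1}h)²) tr((g^{-1}k)²)]√det(g) is non-positive. -/

import Mathlib

open Matrix

set_option maxHeartbeats 1000000

lemma trace_comm_sq_nonpos {n : ℕ} (M N : Matrix (Fin n) (Fin n) ℝ)
    (hM : Mᵀ = M) (hN : Nᵀ = N) :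
    Matrix.trace ((M * N - N * M) * (M * N - N * M)) ≤ 0 := by
  set X := M * N - N * M with hX
  have hXt : Xᵀ = -X := by
    simp [hX, Matrix.transpose_sub, Matrix.transpose_mul, hM, hN]
  have h1 : Matrix.trace (X * X) = - Matrix.trace (Xᵀ * X) := by
    rw [hXt]; simp
  rw [h1, neg_nonpos]
  have : Matrix.trace (Xᵀ * X) = ∑ i, ∑ j, X j i ^ 2 := by
    simp [Matrix.trace, Matrix.mul_apply, Matrix.diag, sq]
  rw [this]
  positivity

theorem stmt_19 {m : ℕ} (g h k : Matrix (Fin m) (Fin m) ℝ)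
    (hg : g.PosDef) (hh : hᵀ = h) (hk : kᵀ = k)
    (h1 : (1 / 4) * Matrix.trace (h * g⁻¹ * h * g⁻¹) * Real.sqrt g.det = 1)
    (h2 : (1 / 4) * Matrix.trace (k * g⁻¹ * k * g⁻¹) * Real.sqrt g.det = 1)
    (h3 : (1 / 4) * Matrix.trace (h * g⁻¹ * k * g⁻¹) * Real.sqrt g.det = 0) :
    (1 / 16) * (Matrix.trace
        ((g⁻¹ * h * (g⁻¹ * k) - g⁻¹ * k * (g⁻¹ * h)) *
          (g⁻¹ * h * (g⁻¹ * k) - g⁻¹ * k * (g⁻¹ * h)))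
      + ((m : ℝ) / 4) * (Matrix.trace (g⁻¹ * h * (g⁻¹ * k))) ^ 2
      - ((m : ℝ) / 4) * Matrix.trace (g⁻¹ * h * (g⁻¹ * h))
          * Matrix.trace (g⁻¹ * k * (g⁻¹ * k))) * Real.sqrt g.det ≤ 0 := by
  -- square root of g
  open scoped MatrixOrder Matrix.Norms.L2Operator in
  set S : Matrix (Fin m) (Fin m) ℝ := CFC.sqrt g with hS
  open scoped MatrixOrder Matrix.Norms.L2Operator in
  have hSS : S * S = g := CFC.sqrt_mul_sqrt_self g (Matrix.nonneg_iff_posSemidef.mpr hg.posSemidef)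
  have hSsym : Sᵀ = S := by
    open scoped MatrixOrder Matrix.Norms.L2Operator in
    have := (Matrix.nonneg_iff_posSemidef.mp (CFC.sqrt_nonneg g)).isHermitian
    change S.IsHermitian at this
    rwa [Matrix.IsHermitian, Matrix.conjTranspose_eq_transpose_of_trivial] at this
  have hdet : IsUnit S.det := by
    have hgdet : g.det ≠ 0 := hg.det_pos.ne'
    have : S.det * S.det = g.det := by rw [← Matrix.det_mul, hSS]
    refine isUnit_iff_ne_zero.mpr fun h0 => hgdet ?_
    rw [← this, h0, mul_zero]
  have hSiS : S⁻¹ * S = 1 := Matrix.nonsing_inv_mul S hdet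
  have hSSi : S * S⁻¹ = 1 := Matrix.mul_nonsing_inv S hdet
  have hcan1 : ∀ x : Matrix (Fin m) (Fin m) ℝ, S * (S⁻¹ * x) = x := fun x => by
    rw [← Matrix.mul_assoc, hSSi, Matrix.one_mul]
  have hcan2 : ∀ x : Matrix (Fin m) (Fin m) ℝ, S⁻¹ * (S * x) = x := fun x => by
    rw [← Matrix.mul_assoc, hSiS, Matrix.one_mul]
  have hginv : g⁻¹ = S⁻¹ * S⁻¹ := by rw [← hSS, Matrix.mul_inv_rev]
  set M : Matrix (Fin m) (Fin m) ℝ := S⁻¹ * h * S⁻¹ with hM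
  set N : Matrix (Fin m) (Fin m) ℝ := S⁻¹ * k * S⁻¹ with hN
  have hA : g⁻¹ * h = S⁻¹ * (M * S) := by
    rw [hginv, hM]; simp [Matrix.mul_assoc, hSiS, hSSi, hcan1, hcan2]
  have hB : g⁻¹ * k = S⁻¹ * (N * S) := by
    rw [hginv, hN]; simp [Matrix.mul_assoc, hSiS, hSSi, hcan1, hcan2]
  have hMsym : Mᵀ = M := by
    rw [hM]
    simp [Matrix.transpose_mul, Matrix.transpose_nonsing_inv, hSsym, hh, Matrix.mul_assoc]
  have hNsym : Nᵀ = N := by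
    rw [hN]
    simp [Matrix.transpose_mul, Matrix.transpose_nonsing_inv, hSsym, hk, Matrix.mul_assoc]
  -- the commutator trace term
  have hcommeq : g⁻¹ * h * (g⁻¹ * k) - g⁻¹ * k * (g⁻¹ * h)
      = S⁻¹ * ((M * N - N * M) * S) := by
    rw [hA, hB]
    simp [Matrix.mul_sub, Matrix.sub_mul, Matrix.mul_assoc, hcan1, hcan2]
  have hT : Matrix.trace
      ((g⁻¹ * h * (g⁻¹ * k) - g⁻¹ * k * (g⁻¹ * h)) *
        (g⁻¹ * h * (g⁻¹ * k) - g⁻¹ * k * (g⁻¹ * h)))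
      = Matrix.trace ((M * N - N * M) * (M * N - N * M)) := by
    rw [hcommeq]
    have step : (S⁻¹ * ((M * N - N * M) * S)) * (S⁻¹ * ((M * N - N * M) * S))
        = S⁻¹ * ((M * N - N * M) * ((M * N - N * M) * S)) := by
      simp [Matrix.mul_assoc, hcan1, hcan2]
    rw [step, Matrix.trace_mul_comm]
    simp [Matrix.mul_assoc, hSSi, hcan1, hcan2]
  have hTle : Matrix.trace
      ((g⁻¹ * h * (g⁻¹ * k) - g⁻¹ * k * (g⁻¹ * h)) *
        (g⁻¹ * h * (g⁻¹ * k) - g⁻¹ * k * (g⁻¹ * h))) ≤ 0 := by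
    rw [hT]; exact trace_comm_sq_nonpos M N hMsym hNsym
  -- trace identities
  have cyc : ∀ a b : Matrix (Fin m) (Fin m) ℝ,
      Matrix.trace (g⁻¹ * a * (g⁻¹ * b)) = Matrix.trace (a * g⁻¹ * b * g⁻¹) := by
    intro a b
    rw [Matrix.mul_assoc g⁻¹ a, Matrix.trace_mul_comm]
    simp [Matrix.mul_assoc]
  -- positivity of √det g
  have hs : 0 < Real.sqrt g.det := Real.sqrt_pos.mpr hg.det_pos
  set s : ℝ := Real.sqrt g.det with hsdef
  have e1 : Matrix.trace (g⁻¹ * h * (g⁻¹ * h)) * s = 4 := by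
    rw [cyc]; linarith
  have e2 : Matrix.trace (g⁻¹ * k * (g⁻¹ * k)) * s = 4 := by
    rw [cyc]; linarith
  have e3 : Matrix.trace (g⁻¹ * h * (g⁻¹ * k)) = 0 := by
    rw [cyc]
    have h3' : Matrix.trace (h * g⁻¹ * k * g⁻¹) * s = 0 := by linarith
    exact (mul_eq_zero.mp h3').resolve_right hs.ne'
  rw [e3]
  set T := Matrix.trace
      ((g⁻¹ * h * (g⁻¹ * k) - g⁻¹ * k * (g⁻¹ * h)) *
        (g⁻¹ * h * (g⁻¹ * k) - g⁻¹ * k * (g⁻¹ * h)))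
  set a := Matrix.trace (g⁻¹ * h * (g⁻¹ * h))
  set b := Matrix.trace (g⁻¹ * k * (g⁻¹ * k))
  have hm : (0:ℝ) ≤ (m:ℝ) := Nat.cast_nonneg m
  have hab : a * b * (s * s) = 16 := by nlinarith [e1, e2]
  have hab2 : 0 < a * b := by nlinarith [hab, mul_pos hs hs]
  have h4 : 0 ≤ (m:ℝ) * (a * b * s) := mul_nonneg hm (mul_pos hab2 hs).le
  have h5 : T * s ≤ 0 := mul_nonpos_of_nonpos_of_nonneg hTle hs.le
  nlinarith [h4, h5]
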